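/- Let k ≥ 4 be an integer and let γ(t) = exp(2πi t) + exp(2πi(k+1)t). If t, t' ∈ [0,1] with t ≠ t', γ(t) = γ(t'), and γ(t) ≠ 0, then there exist integers 0 ≤ j, j' ≤ k(k+2) such that t = j/(k(k+2)) and t' = j'/(k(k+2)). -/

import Mathlib

open Complex

lemma gamma_factor (k : ℕ) (s : ℝ) :
    Complex.exp (2 * Real.pi * Complex.I * (s : ℂ)) +
      Complex.exp (2 * Real.pi * Complex.I * ((k : ℂ) + 1) * (s : ℂ)) =
    Complex.exp (((Real.pi * (k + 2) * s : ℝ) : ℂ) * Complex.I) *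
      (2 * (Real.cos (Real.pi * k * s) : ℂ)) := by
  rw [Complex.ofReal_cos, Complex.two_cos]
  push_cast
  rw [mul_add (Complex.exp _), ← Complex.exp_add, ← Complex.exp_add, add_comm]
  congr 2 <;> ring

lemma exp_I_eq (x y : ℝ) (h : Complex.exp ((x:ℂ) * Complex.I) = Complex.exp ((y:ℂ) * Complex.I)) :
    ∃ n : ℤ, x = y + 2 * Real.pi * n := by
  rw [Complex.exp_eq_exp_iff_exists_int] at h
  obtain ⟨n, hn⟩ := h
  refine ⟨n, ?_⟩
  have := congrArg Complex.im hn
  have h2 : x = y + (n : ℝ) * (2 * Real.pi) := by simpa using this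
  rw [h2]; ring

lemma frac_final (k : ℕ) (hk : 4 ≤ k) (t : ℝ) (h0 : 0 ≤ t) (h1 : t ≤ 1)
    (z : ℤ) (hz : (k : ℝ) * ((k : ℝ) + 2) * t = z) :
    ∃ j : ℕ, j ≤ k * (k + 2) ∧ t = (j : ℝ) / ((k : ℝ) * ((k : ℝ) + 2)) := by
  have hk4 : (4:ℝ) ≤ (k:ℝ) := by exact_mod_cast hk
  have hkpos : (0:ℝ) < (k:ℝ) * ((k:ℝ) + 2) := by nlinarith
  have hz0 : (0:ℤ) ≤ z := by
    have : (0:ℝ) ≤ (z:ℝ) := by rw [← hz]; positivity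
    exact_mod_cast this
  have hzle : z ≤ (k * (k+2) : ℕ) := by
    have : (z:ℝ) ≤ (k:ℝ) * ((k:ℝ)+2) := by nlinarith
    have h2 : ((k * (k+2) : ℕ) : ℝ) = (k:ℝ) * ((k:ℝ)+2) := by push_cast; ring
    exact_mod_cast this.trans_eq h2.symm
  refine ⟨z.toNat, ?_, ?_⟩
  · omega
  · rw [eq_div_iff (ne_of_gt hkpos)]
    have : ((z.toNat : ℕ) : ℝ) = (z : ℝ) := by
      have := Int.toNat_of_nonneg hz0
      exact_mod_cast congrArg (Int.cast : ℤ → ℝ) this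
    rw [this, ← hz]; ring

lemma endpoints_case (t t' : ℝ) (h0 : 0 ≤ t) (h1 : t ≤ 1) (h0' : 0 ≤ t') (h1' : t' ≤ 1)
    (hne : t ≠ t') (c : ℤ) (h : t - t' = c) :
    (t = 1 ∧ t' = 0) ∨ (t = 0 ∧ t' = 1) := by
  have hc0 : c ≠ 0 := by
    rintro rfl
    apply hne
    simpa using sub_eq_zero.mp (by simpa using h)
  have hle : (-1:ℝ) ≤ (c:ℝ) := by rw [← h]; linarith
  have hge : (c:ℝ) ≤ 1 := by rw [← h]; linarith
  have hle' : (-1:ℤ) ≤ c := by exact_mod_cast hle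
  have hge' : c ≤ 1 := by exact_mod_cast hge
  interval_cases c
  · right
    have : t - t' = -1 := by rw [h]; norm_num
    constructor <;> linarith
  · omega
  · left
    have : t - t' = 1 := by rw [h]; norm_num
    constructor <;> linarith

-- packaged conclusion from two integer multiples
lemma conclude (k : ℕ) (hk : 4 ≤ k) (t t' : ℝ) (h0 : 0 ≤ t) (h1 : t ≤ 1)
    (h0' : 0 ≤ t') (h1' : t' ≤ 1) (z z' : ℤ)
    (hz : (k : ℝ) * ((k : ℝ) + 2) * t = z) (hz' : (k : ℝ) * ((k : ℝ) + 2) * t' = z') :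
    ∃ j j' : ℕ, j ≤ k * (k + 2) ∧ j' ≤ k * (k + 2) ∧
      t = (j : ℝ) / ((k : ℝ) * (k + 2)) ∧ t' = (j' : ℝ) / ((k : ℝ) * (k + 2)) := by
  obtain ⟨j, hj1, hj2⟩ := frac_final k hk t h0 h1 z hz
  obtain ⟨j', hj'1, hj'2⟩ := frac_final k hk t' h0' h1' z' hz'
  exact ⟨j, j', hj1, hj'1, hj2, hj'2⟩

-- conclusion from endpoint dichotomy
lemma conclude_endpoints (k : ℕ) (hk : 4 ≤ k) (t t' : ℝ)
    (h : (t = 1 ∧ t' = 0) ∨ (t = 0 ∧ t' = 1)) :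
    ∃ j j' : ℕ, j ≤ k * (k + 2) ∧ j' ≤ k * (k + 2) ∧
      t = (j : ℝ) / ((k : ℝ) * (k + 2)) ∧ t' = (j' : ℝ) / ((k : ℝ) * (k + 2)) := by
  have hk4 : (4:ℝ) ≤ (k:ℝ) := by exact_mod_cast hk
  have hkpos : (0:ℝ) < (k:ℝ) * ((k:ℝ) + 2) := by nlinarith
  have hcast : ((k * (k + 2) : ℕ) : ℝ) = (k:ℝ) * ((k:ℝ) + 2) := by push_cast; ring
  have hone : ((k * (k+2) : ℕ) : ℝ) / ((k : ℝ) * ((k:ℝ) + 2)) = 1 := by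
    rw [hcast]; field_simp
  rcases h with ⟨rfl, rfl⟩ | ⟨rfl, rfl⟩
  · exact ⟨k * (k+2), 0, le_rfl, Nat.zero_le _, hone.symm, by simp⟩
  · exact ⟨0, k * (k+2), Nat.zero_le _, le_rfl, by simp, hone.symm⟩

theorem gamma_self_intersections (k : ℕ) (hk : 4 ≤ k) (t t' : ℝ)
    (ht : t ∈ Set.Icc (0 : ℝ) 1) (ht' : t' ∈ Set.Icc (0 : ℝ) 1) (hne : t ≠ t')
    (heq : Complex.exp (2 * Real.pi * Complex.I * (t : ℂ)) +
        Complex.exp (2 * Real.pi * Complex.I * ((k : ℂ) + 1) * (t : ℂ)) =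
      Complex.exp (2 * Real.pi * Complex.I * (t' : ℂ)) +
        Complex.exp (2 * Real.pi * Complex.I * ((k : ℂ) + 1) * (t' : ℂ)))
    (hnz : Complex.exp (2 * Real.pi * Complex.I * (t : ℂ)) +
        Complex.exp (2 * Real.pi * Complex.I * ((k : ℂ) + 1) * (t : ℂ)) ≠ 0) :
    ∃ j j' : ℕ, j ≤ k * (k + 2) ∧ j' ≤ k * (k + 2) ∧
      t = (j : ℝ) / ((k : ℝ) * (k + 2)) ∧ t' = (j' : ℝ) / ((k : ℝ) * (k + 2)) := by
  obtain ⟨ht0, ht1⟩ := ht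
  obtain ⟨ht0', ht1'⟩ := ht'
  have hπ : (Real.pi : ℝ) ≠ 0 := Real.pi_ne_zero
  rw [gamma_factor k t] at heq hnz
  rw [gamma_factor k t'] at heq
  have hc : Real.cos (Real.pi * k * t) ≠ 0 := by
    intro h
    exact hnz (by rw [h]; simp)
  have habs : |Real.cos (Real.pi * k * t)| = |Real.cos (Real.pi * k * t')| := by
    have h2 := congrArg (fun z : ℂ => ‖z‖) heq
    simp only [norm_mul, Complex.norm_exp_ofReal_mul_I, Complex.norm_two,
      Complex.norm_real, Real.norm_eq_abs, one_mul] at h2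
    linarith
  have hc' : Real.cos (Real.pi * k * t') ≠ 0 := by
    intro h
    rw [h, abs_zero, abs_eq_zero] at habs
    exact hc habs
  have h2ne : (2 * ((Real.cos (Real.pi * k * t') : ℝ) : ℂ)) ≠ 0 := by
    exact mul_ne_zero two_ne_zero (Complex.ofReal_ne_zero.mpr hc')
  rcases abs_eq_abs.mp habs with hcc | hcc
  · -- cos equal case
    rw [hcc] at heq
    have hexp := mul_right_cancel₀ h2ne heq
    obtain ⟨n, hn⟩ := exp_I_eq _ _ hexp
    -- (k+2)(t - t') = 2n
    have hd : ((k:ℝ) + 2) * (t - t') = 2 * n := by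
      apply mul_left_cancel₀ hπ
      linear_combination hn
    -- cos relation
    have h0 : Real.cos (Real.pi * k * t) - Real.cos (Real.pi * k * t') = 0 := by
      rw [hcc]; ring
    rw [Real.cos_sub_cos] at h0
    have hsin : Real.sin ((Real.pi * k * t + Real.pi * k * t')/2) = 0 ∨
        Real.sin ((Real.pi * k * t - Real.pi * k * t')/2) = 0 := by
      rcases mul_eq_zero.mp h0 with h | h
      · rcases mul_eq_zero.mp h with h | h
        · norm_num at h
        · exact Or.inl h
      · exact Or.inr h
    rcases hsin with h | h
    · -- sum case: k(t+t') = 2m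
      obtain ⟨m, hm⟩ := Real.sin_eq_zero_iff.mp h
      have hs : (k:ℝ) * (t + t') = 2 * m := by
        apply mul_left_cancel₀ hπ
        linear_combination -2 * hm
      apply conclude k hk t t' ht0 ht1 ht0' ht1' (k * n + (k + 2) * m) ((k + 2) * m - k * n)
      · push_cast
        linear_combination ((k:ℝ)/2) * hd + (((k:ℝ)+2)/2) * hs
      · push_cast
        linear_combination (-(k:ℝ)/2) * hd + (((k:ℝ)+2)/2) * hs
    · -- diff case: t - t' integer
      obtain ⟨m, hm⟩ := Real.sin_eq_zero_iff.mp h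
      have hs : (k:ℝ) * (t - t') = 2 * m := by
        apply mul_left_cancel₀ hπ
        linear_combination -2 * hm
      have hdiff : t - t' = ((n - m : ℤ) : ℝ) := by
        push_cast
        linarith [hd, hs]
      exact conclude_endpoints k hk t t'
        (endpoints_case t t' ht0 ht1 ht0' ht1' hne _ hdiff)
  · -- cos opposite case
    have hccC : ((Real.cos (Real.pi * k * t) : ℝ) : ℂ) =
        -((Real.cos (Real.pi * k * t') : ℝ) : ℂ) := by exact_mod_cast hcc
    have hx'pi : Complex.exp (((Real.pi * (k + 2) * t' + Real.pi : ℝ) : ℂ) * Complex.I) =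
        - Complex.exp (((Real.pi * (k + 2) * t' : ℝ) : ℂ) * Complex.I) := by
      push_cast
      rw [add_mul, Complex.exp_add, Complex.exp_pi_mul_I]
      ring
    have hexp : Complex.exp (((Real.pi * (k + 2) * t : ℝ) : ℂ) * Complex.I) =
        Complex.exp (((Real.pi * (k + 2) * t' + Real.pi : ℝ) : ℂ) * Complex.I) := by
      rw [hx'pi]
      apply mul_right_cancel₀ h2ne
      linear_combination -heq +
        2 * Complex.exp (((Real.pi * (k + 2) * t : ℝ) : ℂ) * Complex.I) * hccC
    obtain ⟨n, hn⟩ := exp_I_eq _ _ hexp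
    have hd : ((k:ℝ) + 2) * (t - t') = 2 * n + 1 := by
      apply mul_left_cancel₀ hπ
      linear_combination hn
    have h0 : Real.cos (Real.pi * k * t) + Real.cos (Real.pi * k * t') = 0 := by
      rw [hcc]; ring
    rw [Real.cos_add_cos] at h0
    have hcos : Real.cos ((Real.pi * k * t + Real.pi * k * t')/2) = 0 ∨
        Real.cos ((Real.pi * k * t - Real.pi * k * t')/2) = 0 := by
      rcases mul_eq_zero.mp h0 with h | h
      · rcases mul_eq_zero.mp h with h | h
        · norm_num at h
        · exact Or.inl h
      · exact Or.inr h
    rcases hcos with h | h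
    · obtain ⟨m, hm⟩ := Real.cos_eq_zero_iff.mp h
      have hs : (k:ℝ) * (t + t') = 2 * m + 1 := by
        apply mul_left_cancel₀ hπ
        linear_combination 2 * hm
      apply conclude k hk t t' ht0 ht1 ht0' ht1'
        (k * n + (k + 2) * m + k + 1) ((k + 2) * m - k * n + 1)
      · push_cast
        linear_combination ((k:ℝ)/2) * hd + (((k:ℝ)+2)/2) * hs
      · push_cast
        linear_combination (-(k:ℝ)/2) * hd + (((k:ℝ)+2)/2) * hs
    · obtain ⟨m, hm⟩ := Real.cos_eq_zero_iff.mp h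
      have hs : (k:ℝ) * (t - t') = 2 * m + 1 := by
        apply mul_left_cancel₀ hπ
        linear_combination 2 * hm
      have hdiff : t - t' = ((n - m : ℤ) : ℝ) := by
        push_cast
        linarith [hd, hs]
      exact conclude_endpoints k hk t t'
        (endpoints_case t t' ht0 ht1 ht0' ht1' hne _ hdiff)
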